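/- arXiv:2207.10325 — 2 statements merged into one kernel-verified Lean document; each statement's English description precedes it below -/
import Mathlib

section
/- Every optimizer of the merged-objective dual gives all exact reduced costs on I: if u* maximizes w(u) + (1/|I|)·Σ_{kl∈I} r_{kl}(u) over dual feasible u, where I is a set of pairwise incompatible indices each in some feasible solution, then for every kl ∈ I one has w(u*) + r_{kl}(u*) = z*_{|kl} = z* + R_{kl}. -/
open Matrix

/-- Primal feasibility for the LP with partition constraints:
Ax ≥ b, Σ_{j : grp j = i} x_j = 1 for each group i, x ≥ 0. -/
def Feas {m n E : ℕ} (A : Matrix (Fin m) (Fin E) ℝ) (b : Fin m → ℝ)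
    (grp : Fin E → Fin n) (x : Fin E → ℝ) : Prop :=
  b ≤ A.mulVec x ∧ (∀ i : Fin n, (∑ j : Fin E, if grp j = i then x j else 0) = 1) ∧ 0 ≤ x

/-- A 0/1 (integral) vector. -/
def Integral {E : ℕ} (x : Fin E → ℝ) : Prop := ∀ j, x j = 0 ∨ x j = 1

/-- Dual feasibility: u_q ≥ 0 and u_{grp j} + Σ_q A_{qj} u_q ≤ c_j for each index j. -/
def DualFeas {m n E : ℕ} (A : Matrix (Fin m) (Fin E) ℝ) (c : Fin E → ℝ)
    (grp : Fin E → Fin n) (uq : Fin m → ℝ) (uv : Fin n → ℝ) : Prop :=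
  0 ≤ uq ∧ ∀ j : Fin E, uv (grp j) + (∑ q : Fin m, A q j * uq q) ≤ c j

/-- Dual objective w(u) = b·u_q + Σ_i u_i. -/
def dualObj {m n : ℕ} (b : Fin m → ℝ) (uq : Fin m → ℝ) (uv : Fin n → ℝ) : ℝ :=
  b ⬝ᵥ uq + ∑ i : Fin n, uv i

/-- Reduced cost r_j(u) = c_j − u_{grp j} − Σ_q A_{qj} u_q. -/
def rc {m n E : ℕ} (A : Matrix (Fin m) (Fin E) ℝ) (c : Fin E → ℝ)
    (grp : Fin E → Fin n) (uq : Fin m → ℝ) (uv : Fin n → ℝ) (j : Fin E) : ℝ :=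
  c j - uv (grp j) - ∑ q : Fin m, A q j * uq q

/-- Weak duality with one reduced cost: for dual feasible `u` and feasible `x` with
`x kl = 1`, `w(u) + r_kl(u) ≤ c ⬝ x`. -/
lemma weak_dual_rc {m n E : ℕ} (A : Matrix (Fin m) (Fin E) ℝ) (b : Fin m → ℝ)
    (c : Fin E → ℝ) (grp : Fin E → Fin n) (uq : Fin m → ℝ) (uv : Fin n → ℝ)
    (hu : DualFeas A c grp uq uv) (x : Fin E → ℝ) (hx : Feas A b grp x)
    (kl : Fin E) (hkl : x kl = 1) :
    dualObj b uq uv + rc A c grp uq uv kl ≤ c ⬝ᵥ x := by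
  classical
  obtain ⟨hAx, hgrp, hx0⟩ := hx
  set lower : Fin E → ℝ := fun j => uv (grp j) + ∑ q : Fin m, A q j * uq q with hlow
  have step1 : (∑ j : Fin E, lower j * x j) + rc A c grp uq uv kl ≤ c ⬝ᵥ x := by
    have h1 : ∀ j : Fin E, lower j * x j + (if j = kl then rc A c grp uq uv kl else 0)
        ≤ c j * x j := by
      intro j
      by_cases h : j = kl
      · subst h
        rw [if_pos rfl, hkl, mul_one, mul_one]
        simp only [rc, hlow]
        ring_nf
        exact le_rfl
      · rw [if_neg h, add_zero]
        exact mul_le_mul_of_nonneg_right (hu.2 j) (hx0 j)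
    calc (∑ j : Fin E, lower j * x j) + rc A c grp uq uv kl
        = ∑ j : Fin E, (lower j * x j + (if j = kl then rc A c grp uq uv kl else 0)) := by
          rw [Finset.sum_add_distrib, Finset.sum_ite_eq' Finset.univ kl]
          simp
      _ ≤ ∑ j : Fin E, c j * x j := Finset.sum_le_sum (fun j _ => h1 j)
      _ = c ⬝ᵥ x := rfl
  have step2 : (∑ j : Fin E, uv (grp j) * x j) = ∑ i : Fin n, uv i := by
    have h2 : ∀ j : Fin E, uv (grp j) * x j
        = ∑ i : Fin n, (if grp j = i then uv i * x j else 0) := by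
      intro j
      rw [Finset.sum_ite_eq Finset.univ (grp j) (fun i => uv i * x j)]
      simp
    rw [Finset.sum_congr rfl (fun j _ => h2 j), Finset.sum_comm]
    apply Finset.sum_congr rfl
    intro i _
    have h3 : ∀ j : Fin E, (if grp j = i then uv i * x j else 0)
        = uv i * (if grp j = i then x j else 0) := by
      intro j; split <;> simp
    rw [Finset.sum_congr rfl (fun j _ => h3 j), ← Finset.mul_sum, hgrp i, mul_one]
  have step3 : b ⬝ᵥ uq ≤ ∑ j : Fin E, (∑ q : Fin m, A q j * uq q) * x j := by
    have h4 : (∑ j : Fin E, (∑ q : Fin m, A q j * uq q) * x j)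
        = ∑ q : Fin m, uq q * A.mulVec x q := by
      simp only [Finset.sum_mul, Matrix.mulVec, dotProduct, Finset.mul_sum]
      rw [Finset.sum_comm]
      exact Finset.sum_congr rfl (fun q _ => Finset.sum_congr rfl (fun j _ => by ring))
    rw [h4]
    calc b ⬝ᵥ uq = ∑ q : Fin m, uq q * b q := by
          simp only [dotProduct]
          exact Finset.sum_congr rfl (fun q _ => by ring)
      _ ≤ ∑ q : Fin m, uq q * A.mulVec x q :=
          Finset.sum_le_sum (fun q _ => mul_le_mul_of_nonneg_left (hAx q) (hu.1 q))
  have step4 : (∑ j : Fin E, lower j * x j)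
      = (∑ j : Fin E, uv (grp j) * x j) + ∑ j : Fin E, (∑ q : Fin m, A q j * uq q) * x j := by
    rw [← Finset.sum_add_distrib]
    exact Finset.sum_congr rfl (fun j _ => by rw [hlow]; ring)
  simp only [dualObj]
  linarith [step1, step2, step3, step4]

/-- Key bound: any feasible `x` with `x kl ≥ 1/|I|` on `I` has cost at least
`z* + (1/|I|) Σ R`. Uses idealness and pairwise incompatibility. -/
lemma key_bound {m n E : ℕ} (A : Matrix (Fin m) (Fin E) ℝ) (b : Fin m → ℝ)
    (c : Fin E → ℝ) (grp : Fin E → Fin n) (zstar : ℝ)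
    (hz : IsLeast {z | ∃ x : Fin E → ℝ, Feas A b grp x ∧ c ⬝ᵥ x = z} zstar)
    (hideal : ∀ c' : Fin E → ℝ, (∃ x0 : Fin E → ℝ, Feas A b grp x0) →
      ∃ xt : Fin E → ℝ, Feas A b grp xt ∧ Integral xt ∧
        ∀ y : Fin E → ℝ, Feas A b grp y → c' ⬝ᵥ xt ≤ c' ⬝ᵥ y)
    (I : Finset (Fin E)) (hI : I.Nonempty)
    (hinc : ∀ x : Fin E → ℝ, Feas A b grp x → Integral x →
      ∀ j ∈ I, ∀ j' ∈ I, x j = 1 → x j' = 1 → j = j')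
    (R : Fin E → ℝ)
    (hR : ∀ j ∈ I,
      IsLeast {z | ∃ x : Fin E → ℝ, Feas A b grp x ∧ x j = 1 ∧ c ⬝ᵥ x = z}
        (zstar + R j))
    (hRnn : ∀ j ∈ I, 0 ≤ R j)
    (x : Fin E → ℝ) (hx : Feas A b grp x)
    (hxI : ∀ kl ∈ I, 1 / (I.card : ℝ) ≤ x kl) :
    zstar + (1 / (I.card : ℝ)) * ∑ kl ∈ I, R kl ≤ c ⬝ᵥ x := by
  classical
  set κ : ℝ := (I.card : ℝ) with hκdef
  have hκ : 0 < κ := by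
    rw [hκdef]
    exact_mod_cast Finset.card_pos.mpr hI
  set c' : Fin E → ℝ := fun j => c j - (if j ∈ I then R j else 0) with hc'
  have hcx' : ∀ y : Fin E → ℝ, c' ⬝ᵥ y = c ⬝ᵥ y - ∑ j ∈ I, R j * y j := by
    intro y
    simp only [dotProduct, hc', sub_mul, Finset.sum_sub_distrib]
    congr 1
    rw [← Finset.sum_filter_of_ne (p := fun j => j ∈ I)]
    · rw [Finset.filter_mem_eq_inter, Finset.univ_inter]
      exact Finset.sum_congr rfl (fun j hj => by rw [if_pos hj])
    · intro j _ hne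
      by_contra h
      exact hne (by rw [if_neg h, zero_mul])
  obtain ⟨x0, hx0f, _⟩ := hz.1
  obtain ⟨xt, hxtf, hxti, hxtmin⟩ := hideal c' ⟨x0, hx0f⟩
  -- c' ⬝ xt ≥ zstar
  have hxt_lb : zstar ≤ c' ⬝ᵥ xt := by
    rw [hcx']
    by_cases hex : ∃ k0 ∈ I, xt k0 = 1
    · obtain ⟨k0, hk0I, hk0⟩ := hex
      have hsum : ∑ j ∈ I, R j * xt j = R k0 := by
        rw [Finset.sum_eq_single k0]
        · rw [hk0, mul_one]
        · intro j hj hne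
          rcases hxti j with h0 | h1
          · rw [h0, mul_zero]
          · exact absurd (hinc xt hxtf hxti j hj k0 hk0I h1 hk0) hne
        · intro h; exact absurd hk0I h
      rw [hsum]
      have := (hR k0 hk0I).2 ⟨xt, hxtf, hk0, rfl⟩
      linarith
    · push_neg at hex
      have hsum : ∑ j ∈ I, R j * xt j = 0 := by
        apply Finset.sum_eq_zero
        intro j hj
        rcases hxti j with h0 | h1
        · rw [h0, mul_zero]
        · exact absurd h1 (hex j hj)
      rw [hsum]
      have := hz.2 ⟨xt, hxtf, rfl⟩
      linarith
  have hmin := hxtmin x hx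
  have hx' := hcx' x
  -- Σ_{j∈I} R j * x j ≥ (1/κ) Σ R
  have hsumge : (1 / κ) * ∑ kl ∈ I, R kl ≤ ∑ j ∈ I, R j * x j := by
    rw [Finset.mul_sum]
    apply Finset.sum_le_sum
    intro j hj
    calc 1 / κ * R j = R j * (1 / κ) := by ring
      _ ≤ R j * x j := mul_le_mul_of_nonneg_left (hxI j hj) (hRnn j hj)
  linarith [hcx' xt]

lemma swap_avg {ι τ : Type*} (s : Finset ι) (t : Finset τ) (a : ℝ) (g : ι → ℝ)
    (f : τ → ι → ℝ) :
    ∑ e ∈ s, g e * (a * ∑ k ∈ t, f k e) = a * ∑ k ∈ t, ∑ e ∈ s, g e * f k e := by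
  calc ∑ e ∈ s, g e * (a * ∑ k ∈ t, f k e)
      = ∑ e ∈ s, ∑ k ∈ t, a * (g e * f k e) := by
        refine Finset.sum_congr rfl fun e _ => ?_
        rw [Finset.mul_sum, Finset.mul_sum]
        exact Finset.sum_congr rfl fun k _ => by ring
    _ = ∑ k ∈ t, ∑ e ∈ s, a * (g e * f k e) := Finset.sum_comm
    _ = a * ∑ k ∈ t, ∑ e ∈ s, g e * f k e := by
        rw [Finset.mul_sum]
        exact Finset.sum_congr rfl fun k _ => by rw [Finset.mul_sum]

/-- Averaging the integral solutions through each `kl ∈ I` gives a feasible point with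
`x kl ≥ 1/|I|` for all `kl ∈ I`. -/
lemma avg_feas {m n E : ℕ} (A : Matrix (Fin m) (Fin E) ℝ) (b : Fin m → ℝ)
    (grp : Fin E → Fin n) (I : Finset (Fin E)) (hI : I.Nonempty)
    (hmem : ∀ j ∈ I, ∃ x : Fin E → ℝ, Feas A b grp x ∧ Integral x ∧ x j = 1) :
    ∃ x : Fin E → ℝ, Feas A b grp x ∧ ∀ kl ∈ I, 1 / (I.card : ℝ) ≤ x kl := by
  classical
  set κ : ℝ := (I.card : ℝ) with hκdef
  have hκ : 0 < κ := by
    rw [hκdef]; exact_mod_cast Finset.card_pos.mpr hI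
  choose xw hfeas hint hone using hmem
  set S : {j // j ∈ I} → (Fin E → ℝ) := fun k => xw k.1 k.2 with hS
  set x : Fin E → ℝ := fun e => (1 / κ) * ∑ k ∈ I.attach, S k e with hxdef
  have hcard : ∑ k ∈ I.attach, (1:ℝ) = κ := by
    rw [Finset.sum_const, Finset.card_attach, nsmul_eq_mul, mul_one, hκdef]
  have hx : Feas A b grp x := by
    refine ⟨?_, ?_, ?_⟩
    · intro q
      have h1 : A.mulVec x q = (1 / κ) * ∑ k ∈ I.attach, A.mulVec (S k) q := by
        simp only [Matrix.mulVec, dotProduct, hxdef]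
        exact swap_avg Finset.univ I.attach (1/κ) (fun e => A q e) (fun k e => S k e)
      rw [h1]
      have h2 : ∑ k ∈ I.attach, b q ≤ ∑ k ∈ I.attach, A.mulVec (S k) q :=
        Finset.sum_le_sum (fun k _ => (hfeas k.1 k.2) |>.1 q)
      have h3 : ∑ k ∈ I.attach, b q = κ * b q := by
        rw [Finset.sum_const, Finset.card_attach, nsmul_eq_mul, hκdef]
      calc b q = (1 / κ) * (κ * b q) := by field_simp
        _ ≤ (1 / κ) * ∑ k ∈ I.attach, A.mulVec (S k) q := by
            apply mul_le_mul_of_nonneg_left _ (by positivity)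
            rw [← h3]; exact h2
    · intro i
      have hind : ∀ e, (if grp e = i then x e else 0)
          = (if grp e = i then (1:ℝ) else 0) * x e := by
        intro e; split <;> simp
      rw [Finset.sum_congr rfl (fun e _ => hind e)]
      simp only [hxdef]
      rw [swap_avg]
      have h2 : ∀ k ∈ I.attach,
          (∑ e : Fin E, (if grp e = i then (1:ℝ) else 0) * S k e) = 1 := by
        intro k _
        have hco : (∑ e : Fin E, (if grp e = i then (1:ℝ) else 0) * S k e)
            = ∑ e : Fin E, (if grp e = i then S k e else 0) :=
          Finset.sum_congr rfl (fun e _ => by split <;> simp)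
        rw [hco]
        exact (hfeas k.1 k.2).2.1 i
      rw [Finset.sum_congr rfl h2, hcard]
      field_simp
    · intro e
      simp only [hxdef]
      apply mul_nonneg (by positivity)
      exact Finset.sum_nonneg (fun k _ => (hfeas k.1 k.2).2.2 e)
  refine ⟨x, hx, ?_⟩
  intro kl hkl
  have h1 : (1:ℝ) ≤ ∑ k ∈ I.attach, S k kl := by
    have h2 := Finset.single_le_sum (f := fun k => S k kl)
      (fun k _ => (hfeas k.1 k.2).2.2 kl) (Finset.mem_attach I ⟨kl, hkl⟩)
    have h3 : S ⟨kl, hkl⟩ kl = 1 := hone kl hkl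
    rw [← h3]
    exact h2
  have h4 : (1/κ) * 1 ≤ (1/κ) * ∑ k ∈ I.attach, S k kl :=
    mul_le_mul_of_nonneg_left h1 (by positivity)
  simpa [hxdef] using h4


open Classical in
/-- Combination matrix for Fourier–Motzkin elimination of the last variable. -/
noncomputable def FMC {R : Type} {s : ℕ} (M : Matrix R (Fin (s+1)) ℝ) :
    Matrix (R ⊕ R × R) R ℝ
  | Sum.inl z, q => if M z (Fin.last s) = 0 ∧ q = z then 1 else 0
  | Sum.inr (p, nn), q =>
      if 0 < M p (Fin.last s) ∧ M nn (Fin.last s) < 0 then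
        (if q = p then -(M nn (Fin.last s)) else 0)
          + (if q = nn then M p (Fin.last s) else 0)
      else 0

lemma FMC_nonneg {R : Type} {s : ℕ} (M : Matrix R (Fin (s+1)) ℝ) (r' : R ⊕ R × R) (q : R) :
    0 ≤ FMC M r' q := by
  classical
  rcases r' with z | ⟨p, nn⟩
  · simp only [FMC]; split <;> norm_num
  · simp only [FMC]
    split
    · next h =>
      apply add_nonneg
      · split <;> linarith [h.2]
      · split <;> linarith [h.1]
    · norm_num

lemma FMC_row_inl {R : Type} [Fintype R] {s : ℕ} (M : Matrix R (Fin (s+1)) ℝ)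
    (v : R → ℝ) (z : R) :
    (∑ q : R, FMC M (Sum.inl z) q * v q)
      = if M z (Fin.last s) = 0 then v z else 0 := by
  classical
  by_cases h : M z (Fin.last s) = 0 <;> simp [FMC, h]

lemma FMC_row_inr {R : Type} [Fintype R] {s : ℕ} (M : Matrix R (Fin (s+1)) ℝ)
    (v : R → ℝ) (p nn : R) :
    (∑ q : R, FMC M (Sum.inr (p, nn)) q * v q)
      = if 0 < M p (Fin.last s) ∧ M nn (Fin.last s) < 0 then
          -(M nn (Fin.last s)) * v p + M p (Fin.last s) * v nn
        else 0 := by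
  classical
  by_cases h : 0 < M p (Fin.last s) ∧ M nn (Fin.last s) < 0 <;>
    simp [FMC, h, add_mul, Finset.sum_add_distrib]

lemma FM_div_le {ap an dp dn mp mn : ℝ} (hp : 0 < ap) (hn : an < 0)
    (h : -an * dp + ap * dn ≤ -an * mp + ap * mn) :
    (dp - mp) / ap ≤ (dn - mn) / an := by
  have h1 : (dp - mp) / ap ≤ (mn - dn) / (-an) := by
    rw [div_le_div_iff₀ hp (by linarith : (0:ℝ) < -an)]
    nlinarith
  have h2 : (mn - dn) / (-an) = (dn - mn) / an := by
    rw [div_eq_div_iff (by linarith : (-an) ≠ 0) (by linarith : an ≠ 0)]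
    ring
  linarith [h2 ▸ h1]

/-- The derived (eliminated) matrix: rows are nonnegative combinations of rows of `M`
with zero coefficient on the last variable. -/
noncomputable def FMD {R : Type} [Fintype R] {s : ℕ} (M : Matrix R (Fin (s+1)) ℝ) :
    Matrix (R ⊕ R × R) (Fin s) ℝ :=
  Matrix.of fun r' j => ((FMC M) * M) r' j.castSucc

lemma FM_step_infeasible {R : Type} [Fintype R] {s : ℕ} (M : Matrix R (Fin (s+1)) ℝ)
    (d : R → ℝ) (hinf : ∀ x : Fin (s+1) → ℝ, ¬ d ≤ M.mulVec x) :
    ∀ x' : Fin s → ℝ, ¬ (FMC M).mulVec d ≤ (FMD M).mulVec x' := by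
  classical
  intro x' hx'
  set a : R → ℝ := fun q => M q (Fin.last s) with ha
  set mq : R → ℝ := fun q => ∑ j : Fin s, M q j.castSucc * x' j with hmq
  -- facts from rows
  have key1 : ∀ q, a q = 0 → d q ≤ mq q := by
    intro q hq
    have h1 := hx' (Sum.inl q)
    have e1 : (FMC M).mulVec d (Sum.inl q) = d q := by
      simp only [Matrix.mulVec, dotProduct]
      rw [FMC_row_inl]
      simp [show M q (Fin.last s) = 0 from hq]
    have e2 : (FMD M).mulVec x' (Sum.inl q) = mq q := by
      simp only [Matrix.mulVec, dotProduct, hmq, FMD, Matrix.of_apply]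
      apply Finset.sum_congr rfl
      intro j _
      rw [Matrix.mul_apply, FMC_row_inl]
      simp [show M q (Fin.last s) = 0 from hq]
    rw [e1, e2] at h1
    exact h1
  have key2 : ∀ p nn, 0 < a p → a nn < 0 →
      -(a nn) * d p + a p * d nn ≤ -(a nn) * mq p + a p * mq nn := by
    intro p nn hp hn
    have h1 := hx' (Sum.inr (p, nn))
    have e1 : (FMC M).mulVec d (Sum.inr (p, nn)) = -(a nn) * d p + a p * d nn := by
      simp only [Matrix.mulVec, dotProduct]
      rw [FMC_row_inr]
      simp [show 0 < M p (Fin.last s) from hp, show M nn (Fin.last s) < 0 from hn]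
      rfl
    have e2 : (FMD M).mulVec x' (Sum.inr (p, nn)) = -(a nn) * mq p + a p * mq nn := by
      simp only [Matrix.mulVec, dotProduct, hmq, FMD, Matrix.of_apply]
      have h3 : ∀ j : Fin s, ((FMC M) * M) (Sum.inr (p, nn)) j.castSucc * x' j
          = -(a nn) * (M p j.castSucc * x' j) + a p * (M nn j.castSucc * x' j) := by
        intro j
        rw [Matrix.mul_apply, FMC_row_inr]
        simp only [show 0 < M p (Fin.last s) from hp, show M nn (Fin.last s) < 0 from hn,
          and_self, if_true]
        ring
      rw [Finset.sum_congr rfl (fun j _ => h3 j), Finset.sum_add_distrib,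
        ← Finset.mul_sum, ← Finset.mul_sum]
    rw [e1, e2] at h1
    exact h1
  -- choose the value of the last variable
  set g : R → ℝ := fun q => (d q - mq q) / a q with hg
  set Pset : Finset R := Finset.univ.filter (fun q => 0 < a q) with hP
  set Nset : Finset R := Finset.univ.filter (fun q => a q < 0) with hN
  set t : ℝ :=
    if hp : Pset.Nonempty then Pset.sup' hp g
    else if hn : Nset.Nonempty then Nset.inf' hn g else 0 with ht
  have hcan : ∀ q, a q ≠ 0 → a q * g q = d q - mq q := by
    intro q hq
    rw [hg]
    dsimp only
    rw [mul_comm, div_mul_cancel₀ _ hq]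
  have htq : ∀ q, d q ≤ mq q + a q * t := by
    intro q
    rcases lt_trichotomy (a q) 0 with hq | hq | hq
    · -- a q < 0 : need t ≤ g q
      have hqN : q ∈ Nset := by simp [hN, hq]
      have hgle : t ≤ g q := by
        rw [ht]
        split
        · next hp =>
          apply Finset.sup'_le
          intro p hpP
          have hpa : 0 < a p := by simpa [hP] using hpP
          exact FM_div_le hpa hq (key2 p q hpa hq)
        · next hp =>
          rw [dif_pos ⟨q, hqN⟩]
          exact Finset.inf'_le g hqN
      have h4 : a q * t ≥ a q * g q := mul_le_mul_of_nonpos_left hgle (le_of_lt hq)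
      have := hcan q (ne_of_lt hq)
      linarith
    · -- a q = 0
      have := key1 q hq
      rw [hq]; linarith
    · -- 0 < a q : need g q ≤ t
      have hqP : q ∈ Pset := by simp [hP, hq]
      have hgle : g q ≤ t := by
        rw [ht, dif_pos ⟨q, hqP⟩]
        exact Finset.le_sup' g hqP
      have h4 : a q * g q ≤ a q * t := mul_le_mul_of_nonneg_left hgle (le_of_lt hq)
      have := hcan q (ne_of_gt hq)
      linarith
  -- contradiction with infeasibility of the original system
  apply hinf (Fin.snoc x' t)
  intro q
  have h5 : M.mulVec (Fin.snoc x' t) q = mq q + a q * t := by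
    simp only [Matrix.mulVec, dotProduct]
    rw [Fin.sum_univ_castSucc]
    simp [hmq, ha, Fin.snoc_castSucc, Fin.snoc_last]
  rw [h5]
  exact htq q

/-- Farkas' lemma (infeasibility certificate form), proved by Fourier–Motzkin elimination. -/
theorem farkasFM : ∀ (s : ℕ) (R : Type) [Fintype R] (M : Matrix R (Fin s) ℝ) (d : R → ℝ),
    (∀ x : Fin s → ℝ, ¬ d ≤ M.mulVec x) →
    ∃ y : R → ℝ, 0 ≤ y ∧ M.vecMul y = 0 ∧ 0 < d ⬝ᵥ y := by
  intro s
  induction s with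
  | zero =>
    intro R _ M d hinf
    classical
    obtain ⟨q, hq⟩ : ∃ q, ¬ d q ≤ M.mulVec 0 q := by
      by_contra h
      push_neg at h
      exact hinf 0 h
    have hq0 : M.mulVec 0 q = 0 := by
      simp [Matrix.mulVec, dotProduct]
    refine ⟨fun r => if r = q then 1 else 0, ?_, ?_, ?_⟩
    · intro r; dsimp only; split <;> norm_num
    · funext j; exact j.elim0
    · have he : d ⬝ᵥ (fun r => if r = q then 1 else 0) = d q := by
        simp [dotProduct]
      rw [he]
      rw [hq0] at hq
      linarith [not_le.mp hq]
  | succ s ih =>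
    intro R _ M d hinf
    classical
    obtain ⟨y', hy'0, hy'M, hy'd⟩ := ih (R ⊕ R × R) (FMD M) ((FMC M).mulVec d)
      (FM_step_infeasible M d hinf)
    refine ⟨(FMC M).vecMul y', ?_, ?_, ?_⟩
    · intro q
      apply Finset.sum_nonneg
      intro r' _
      exact mul_nonneg (hy'0 r') (FMC_nonneg M r' q)
    · have hcomp : M.vecMul ((FMC M).vecMul y') = ((FMC M) * M).vecMul y' := by
        rw [Matrix.vecMul_vecMul]
      rw [hcomp]
      funext k
      refine Fin.lastCases ?_ ?_ k
      · -- last column of FMC M * M is zero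
        have hz : ∀ r', ((FMC M) * M) r' (Fin.last s) = 0 := by
          intro r'
          rcases r' with z | ⟨p, nn⟩
          · rw [Matrix.mul_apply, FMC_row_inl]
            split
            · next h => exact h
            · rfl
          · rw [Matrix.mul_apply, FMC_row_inr]
            split
            · ring
            · rfl
        simp only [Matrix.vecMul, dotProduct]
        rw [Finset.sum_congr rfl (fun r' _ => by rw [hz r', mul_zero])]
        simp
      · intro j
        have := congrFun hy'M j
        simp only [Matrix.vecMul, dotProduct, FMD, Matrix.of_apply] at this ⊢
        simpa using this
    · have he : d ⬝ᵥ (FMC M).vecMul y' = (FMC M).mulVec d ⬝ᵥ y' := by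
        rw [dotProduct_comm, ← Matrix.dotProduct_mulVec, dotProduct_comm]
      rw [he, dotProduct_comm] at *
      exact hy'd

/-- Strong LP duality bound: if `Mx ≥ d` is feasible and `c ⬝ x ≥ V` on the feasible set,
then there are nonnegative multipliers `y` with `yᵀM = c` and `d ⬝ y > V - ε`. -/
theorem lp_strong_dual {s : ℕ} {R : Type} [Fintype R] (M : Matrix R (Fin s) ℝ) (d : R → ℝ)
    (c : Fin s → ℝ) (V : ℝ) (hfeas : ∃ x : Fin s → ℝ, d ≤ M.mulVec x)
    (hbdd : ∀ x : Fin s → ℝ, d ≤ M.mulVec x → V ≤ c ⬝ᵥ x)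
    (ε : ℝ) (hε : 0 < ε) :
    ∃ y : R → ℝ, 0 ≤ y ∧ M.vecMul y = c ∧ V - ε < d ⬝ᵥ y := by
  classical
  set M1 : Matrix (R ⊕ Unit) (Fin s) ℝ :=
    Matrix.of (Sum.elim (fun q => M q) (fun _ j => -c j)) with hM1
  set d1 : (R ⊕ Unit) → ℝ := Sum.elim d (fun _ => -(V - ε)) with hd1
  have hinf : ∀ x : Fin s → ℝ, ¬ d1 ≤ M1.mulVec x := by
    intro x hx
    have h1 : d ≤ M.mulVec x := by
      intro q
      have := hx (Sum.inl q)
      simpa [hM1, hd1, Matrix.mulVec, dotProduct] using this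
    have h2 := hx (Sum.inr ())
    have h2' : -(V - ε) ≤ -(c ⬝ᵥ x) := by
      simpa [hM1, hd1, Matrix.mulVec, dotProduct] using h2
    have := hbdd x h1
    linarith
  obtain ⟨y1, hy0, hyM, hyd⟩ := farkasFM s (R ⊕ Unit) M1 d1 hinf
  set t := y1 (Sum.inr ()) with htdef
  set y0 : R → ℝ := fun q => y1 (Sum.inl q) with hy0def
  have hyMj : ∀ j, M.vecMul y0 j + t * (-(c j)) = 0 := by
    intro j
    have := congrFun hyM j
    simpa [Matrix.vecMul, dotProduct, Fintype.sum_sum_type, hM1, hy0def, htdef] using this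
  have hdy : 0 < d ⬝ᵥ y0 + (-(V - ε)) * t := by
    have : d1 ⬝ᵥ y1 = d ⬝ᵥ y0 + (-(V - ε)) * t := by
      simp [dotProduct, Fintype.sum_sum_type, hd1, hy0def, htdef]
    rw [this] at hyd
    exact hyd
  have ht : 0 < t := by
    rcases (hy0 (Sum.inr ())).lt_or_eq with h | h
    · exact h
    · exfalso
      obtain ⟨x0, hx0⟩ := hfeas
      have ht0 : t = 0 := by rw [htdef, ← h]; simp
      have hMy0 : M.vecMul y0 = 0 := by
        funext j
        have := hyMj j
        rw [ht0] at this
        simpa using this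
      have h5 : d ⬝ᵥ y0 ≤ y0 ⬝ᵥ M.mulVec x0 := by
        rw [dotProduct_comm d y0]
        apply Finset.sum_le_sum
        intro q _
        exact mul_le_mul_of_nonneg_left (hx0 q) (hy0 (Sum.inl q))
      rw [Matrix.dotProduct_mulVec, hMy0, zero_dotProduct] at h5
      rw [ht0] at hdy
      simp at hdy
      linarith
  refine ⟨t⁻¹ • y0, ?_, ?_, ?_⟩
  · intro q
    exact mul_nonneg (by positivity) (hy0 (Sum.inl q))
  · rw [Matrix.smul_vecMul]
    funext j
    have := hyMj j
    simp only [Pi.smul_apply, smul_eq_mul]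
    field_simp
    linarith [hyMj j]
  · have hD : (V - ε) * t < d ⬝ᵥ y0 := by linarith
    have h6 : t⁻¹ * ((V - ε) * t) < t⁻¹ * (d ⬝ᵥ y0) :=
      mul_lt_mul_of_pos_left hD (inv_pos.mpr ht)
    have h7 : t⁻¹ * ((V - ε) * t) = V - ε := by field_simp
    have h8 : d ⬝ᵥ (t⁻¹ • y0) = t⁻¹ * (d ⬝ᵥ y0) := by
      simp only [dotProduct, Pi.smul_apply, smul_eq_mul, Finset.mul_sum]
      exact Finset.sum_congr rfl (fun q _ => by ring)
    rw [h8]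
    linarith


/-- Every optimizer of the merged-objective dual gives all exact reduced costs on I:
if u* maximizes w(u) + (1/|I|)·Σ_{kl∈I} r_{kl}(u) over dual feasible u, where I is a
nonempty set of pairwise incompatible indices each in some feasible integral solution,
then for every kl ∈ I, w(u*) + r_{kl}(u*) = z*_{|kl} = z* + R_{kl}. -/
theorem stmt16 {m n E : ℕ} (A : Matrix (Fin m) (Fin E) ℝ) (b : Fin m → ℝ)
    (c : Fin E → ℝ) (grp : Fin E → Fin n) (zstar : ℝ)
    (hz : IsLeast {z | ∃ x : Fin E → ℝ, Feas A b grp x ∧ c ⬝ᵥ x = z} zstar)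
    (hideal : ∀ c' : Fin E → ℝ, (∃ x0 : Fin E → ℝ, Feas A b grp x0) →
      ∃ xt : Fin E → ℝ, Feas A b grp xt ∧ Integral xt ∧
        ∀ y : Fin E → ℝ, Feas A b grp y → c' ⬝ᵥ xt ≤ c' ⬝ᵥ y)
    (I : Finset (Fin E)) (hI : I.Nonempty)
    (hinc : ∀ x : Fin E → ℝ, Feas A b grp x → Integral x →
      ∀ j ∈ I, ∀ j' ∈ I, x j = 1 → x j' = 1 → j = j')
    (hmem : ∀ j ∈ I, ∃ x : Fin E → ℝ, Feas A b grp x ∧ Integral x ∧ x j = 1)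
    (R : Fin E → ℝ)
    (hR : ∀ j ∈ I,
      IsLeast {z | ∃ x : Fin E → ℝ, Feas A b grp x ∧ x j = 1 ∧ c ⬝ᵥ x = z}
        (zstar + R j))
    (uq : Fin m → ℝ) (uv : Fin n → ℝ) (hu : DualFeas A c grp uq uv)
    (hmaxu : ∀ (uq' : Fin m → ℝ) (uv' : Fin n → ℝ), DualFeas A c grp uq' uv' →
      dualObj b uq' uv' + (1 / (I.card : ℝ)) * ∑ kl ∈ I, rc A c grp uq' uv' kl ≤
      dualObj b uq uv + (1 / (I.card : ℝ)) * ∑ kl ∈ I, rc A c grp uq uv kl) :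
    ∀ kl ∈ I, dualObj b uq uv + rc A c grp uq uv kl = zstar + R kl := by
  classical
  set κ : ℝ := (I.card : ℝ) with hκdef
  have hκ : 0 < κ := by rw [hκdef]; exact_mod_cast Finset.card_pos.mpr hI
  have hRnn : ∀ j ∈ I, 0 ≤ R j := by
    intro j hj
    obtain ⟨xR, hxRf, _, hxRc⟩ := (hR j hj).1
    have := hz.2 ⟨xR, hxRf, hxRc⟩
    linarith
  set V : ℝ := zstar + (1/κ) * ∑ kl ∈ I, R kl with hV
  set α : Fin E → ℝ := fun e => if e ∈ I then 1/κ else 0 with hα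
  set M0 : Matrix (Fin m ⊕ (Fin n ⊕ (Fin n ⊕ Fin E))) (Fin E) ℝ :=
    Matrix.of (Sum.elim (fun q => A q)
      (Sum.elim (fun i j => if grp j = i then (1:ℝ) else 0)
        (Sum.elim (fun i j => if grp j = i then (-1:ℝ) else 0)
          (fun e j => if j = e then (1:ℝ) else 0)))) with hM0
  set d0 : (Fin m ⊕ (Fin n ⊕ (Fin n ⊕ Fin E))) → ℝ :=
    Sum.elim b (Sum.elim (fun _ => (1:ℝ)) (Sum.elim (fun _ => (-1:ℝ)) α)) with hd0
  have hrow1 : ∀ (x : Fin E → ℝ) q, M0.mulVec x (Sum.inl q) = A.mulVec x q := by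
    intro x q; rw [hM0]; rfl
  have hrow2 : ∀ (x : Fin E → ℝ) i, M0.mulVec x (Sum.inr (Sum.inl i))
      = ∑ j : Fin E, if grp j = i then x j else 0 := by
    intro x i
    rw [hM0]
    simp only [Matrix.mulVec, dotProduct, Matrix.of_apply, Sum.elim_inr, Sum.elim_inl]
    exact Finset.sum_congr rfl (fun j _ => by split <;> simp)
  have hrow3 : ∀ (x : Fin E → ℝ) i, M0.mulVec x (Sum.inr (Sum.inr (Sum.inl i)))
      = -∑ j : Fin E, if grp j = i then x j else 0 := by
    intro x i
    rw [hM0]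
    simp only [Matrix.mulVec, dotProduct, Matrix.of_apply, Sum.elim_inr, Sum.elim_inl]
    rw [← Finset.sum_neg_distrib]
    exact Finset.sum_congr rfl (fun j _ => by split <;> simp)
  have hrow4 : ∀ (x : Fin E → ℝ) e, M0.mulVec x (Sum.inr (Sum.inr (Sum.inr e))) = x e := by
    intro x e
    rw [hM0]
    simp only [Matrix.mulVec, dotProduct, Matrix.of_apply, Sum.elim_inr]
    simp [ite_mul]
  have hα0 : ∀ e, 0 ≤ α e := by
    intro e; rw [hα]; dsimp only; split
    · positivity
    · exact le_rfl
  have hequiv : ∀ x : Fin E → ℝ,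
      d0 ≤ M0.mulVec x ↔ (Feas A b grp x ∧ ∀ kl ∈ I, 1/κ ≤ x kl) := by
    intro x
    constructor
    · intro h
      have hA : b ≤ A.mulVec x := by
        intro q
        have h1 := h (Sum.inl q)
        rwa [hrow1] at h1
      have hg : ∀ i, (∑ j : Fin E, if grp j = i then x j else 0) = 1 := by
        intro i
        have h1 := h (Sum.inr (Sum.inl i)); rw [hrow2] at h1
        have h2 := h (Sum.inr (Sum.inr (Sum.inl i))); rw [hrow3] at h2
        simp only [hd0, Sum.elim_inr, Sum.elim_inl] at h1 h2
        linarith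
      have hx0 : 0 ≤ x := by
        intro e
        have h4 := h (Sum.inr (Sum.inr (Sum.inr e))); rw [hrow4] at h4
        have h5 : d0 (Sum.inr (Sum.inr (Sum.inr e))) = α e := by
          rw [hd0]; rfl
        rw [h5] at h4
        show (0:ℝ) ≤ x e
        linarith [hα0 e]
      have hxI : ∀ kl ∈ I, 1/κ ≤ x kl := by
        intro kl hkl
        have h4 := h (Sum.inr (Sum.inr (Sum.inr kl))); rw [hrow4] at h4
        have h5 : d0 (Sum.inr (Sum.inr (Sum.inr kl))) = α kl := by
          rw [hd0]; rfl
        rw [h5, hα] at h4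
        simpa [hkl] using h4
      exact ⟨⟨hA, hg, hx0⟩, hxI⟩
    · rintro ⟨⟨hA, hg, hx0⟩, hxI⟩
      intro r
      rcases r with q | i | i | e
      · rw [hrow1]
        exact hA q
      · rw [hrow2]
        rw [hd0]
        simp [hg i]
      · rw [hrow3]
        rw [hd0]
        simp [hg i]
      · rw [hrow4]
        have h5 : d0 (Sum.inr (Sum.inr (Sum.inr e))) = α e := by rw [hd0]; rfl
        rw [h5, hα]
        dsimp only
        split
        · next he => exact hxI e he
        · exact hx0 e
  have hfeas0 : ∃ x : Fin E → ℝ, d0 ≤ M0.mulVec x := by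
    obtain ⟨x, hx, hxI⟩ := avg_feas A b grp I hI hmem
    exact ⟨x, (hequiv x).2 ⟨hx, fun kl hkl => by rw [hκdef]; exact hxI kl hkl⟩⟩
  have hbdd0 : ∀ x : Fin E → ℝ, d0 ≤ M0.mulVec x → V ≤ c ⬝ᵥ x := by
    intro x h
    obtain ⟨hx, hxI⟩ := (hequiv x).1 h
    rw [hV, hκdef]
    exact key_bound A b c grp zstar hz hideal I hI hinc R hR hRnn x hx
      (fun kl hkl => by rw [← hκdef]; exact hxI kl hkl)
  have hweak : ∀ (uq' : Fin m → ℝ) (uv' : Fin n → ℝ), DualFeas A c grp uq' uv' →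
      ∀ kl ∈ I, dualObj b uq' uv' + rc A c grp uq' uv' kl ≤ zstar + R kl := by
    intro uq' uv' hu' kl hkl
    obtain ⟨xR, hxRf, hxRkl, hxRc⟩ := (hR kl hkl).1
    have h1 := weak_dual_rc A b c grp uq' uv' hu' xR hxRf kl hxRkl
    rw [hxRc] at h1
    exact h1
  set Mu : ℝ := dualObj b uq uv + (1/κ) * ∑ kl ∈ I, rc A c grp uq uv kl with hMu
  have hcardsum : ∀ z : ℝ, ∑ _kl ∈ I, z = κ * z := by
    intro z
    rw [Finset.sum_const, nsmul_eq_mul, hκdef]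
  have hub : Mu ≤ V := by
    have hsum : ∑ kl ∈ I, (dualObj b uq uv + rc A c grp uq uv kl)
        ≤ ∑ kl ∈ I, (zstar + R kl) :=
      Finset.sum_le_sum (fun kl hkl => hweak uq uv hu kl hkl)
    rw [Finset.sum_add_distrib, Finset.sum_add_distrib, hcardsum, hcardsum] at hsum
    have h2 : (1/κ) * (κ * dualObj b uq uv + ∑ kl ∈ I, rc A c grp uq uv kl)
        ≤ (1/κ) * (κ * zstar + ∑ kl ∈ I, R kl) :=
      mul_le_mul_of_nonneg_left hsum (by positivity)
    have e1 : ∀ (a s : ℝ), (1/κ) * (κ * a + s) = a + (1/κ) * s := by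
      intro a s; field_simp
    rw [e1, e1] at h2
    rw [hMu, hV]
    exact h2
  have hlb : V ≤ Mu := by
    by_contra hcon
    push_neg at hcon
    obtain ⟨y, hy0, hyM, hyd⟩ := lp_strong_dual M0 d0 c V hfeas0 hbdd0 (V - Mu) (by linarith)
    set uq' : Fin m → ℝ := fun q => y (Sum.inl q) with huq'
    set uv' : Fin n → ℝ := fun i =>
      y (Sum.inr (Sum.inl i)) - y (Sum.inr (Sum.inr (Sum.inl i))) with huv'
    set μ : Fin E → ℝ := fun e => y (Sum.inr (Sum.inr (Sum.inr e))) with hμ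
    have hcol : ∀ j : Fin E, (∑ q : Fin m, A q j * uq' q) + uv' (grp j) + μ j = c j := by
      intro j
      have h1 := congrFun hyM j
      rw [hM0] at h1
      simp only [Matrix.vecMul, dotProduct, Fintype.sum_sum_type, Matrix.of_apply,
        Sum.elim_inl, Sum.elim_inr, mul_ite, mul_one, mul_zero, mul_neg,
        Finset.sum_ite_eq, Finset.mem_univ, if_true] at h1
      have hflip : ∑ q : Fin m, A q j * uq' q = ∑ q : Fin m, y (Sum.inl q) * A q j := by
        rw [huq']
        exact Finset.sum_congr rfl (fun q _ => by ring)
      rw [huv', hμ]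
      dsimp only
      rw [hflip]
      linarith [h1]
    have hdual' : DualFeas A c grp uq' uv' := by
      constructor
      · intro q; exact hy0 (Sum.inl q)
      · intro j
        have h1 := hcol j
        have h2 := hy0 (Sum.inr (Sum.inr (Sum.inr j)))
        simp only [Pi.zero_apply] at h2
        rw [hμ] at h1
        dsimp only at h1
        linarith
    have hrc : ∀ kl ∈ I, rc A c grp uq' uv' kl = μ kl := by
      intro kl _
      have h1 := hcol kl
      simp only [rc]
      linarith
    have hdy : d0 ⬝ᵥ y = dualObj b uq' uv' + (1/κ) * ∑ kl ∈ I, μ kl := by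
      rw [hd0]
      simp only [dotProduct, Fintype.sum_sum_type, Sum.elim_inl, Sum.elim_inr, dualObj,
        one_mul, neg_mul]
      have e1 : ∑ q : Fin m, b q * y (Sum.inl q) = b ⬝ᵥ uq' := by
        rw [huq']; rfl
      have e2 : ∑ i : Fin n, uv' i
          = ∑ i : Fin n, y (Sum.inr (Sum.inl i))
            - ∑ i : Fin n, y (Sum.inr (Sum.inr (Sum.inl i))) := by
        rw [huv', ← Finset.sum_sub_distrib]
      have e3 : ∑ e : Fin E, α e * y (Sum.inr (Sum.inr (Sum.inr e)))
          = (1/κ) * ∑ kl ∈ I, μ kl := by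
        rw [hα, hμ, Finset.mul_sum]
        dsimp only
        rw [← Finset.sum_filter_of_ne (p := fun e => e ∈ I)]
        · rw [Finset.filter_mem_eq_inter, Finset.univ_inter]
          exact Finset.sum_congr rfl (fun e he => by rw [if_pos he])
        · intro e _ hne
          by_contra hnot
          exact hne (by rw [if_neg hnot, zero_mul])
      rw [e1, e3, e2, Finset.sum_neg_distrib]
      ring
    have hgt : Mu < d0 ⬝ᵥ y := by
      have : V - (V - Mu) = Mu := by ring
      rwa [this] at hyd
    have hle := hmaxu uq' uv' hdual'
    have hsame : dualObj b uq' uv' + (1/κ) * ∑ kl ∈ I, rc A c grp uq' uv' kl = d0 ⬝ᵥ y := by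
      rw [hdy, Finset.sum_congr rfl hrc]
    rw [hsame] at hle
    linarith
  have hMuV : Mu = V := le_antisymm hub hlb
  intro kl hkl
  have hterm : ∀ j ∈ I, 0 ≤ (zstar + R j) - (dualObj b uq uv + rc A c grp uq uv j) :=
    fun j hj => by linarith [hweak uq uv hu j hj]
  have hsum0 : ∑ j ∈ I, ((zstar + R j) - (dualObj b uq uv + rc A c grp uq uv j)) = 0 := by
    have h1 : κ * Mu = κ * V := by rw [hMuV]
    rw [hMu, hV] at h1
    have e1 : ∀ (a s : ℝ), κ * (a + (1/κ) * s) = κ * a + s := by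
      intro a s; field_simp
    rw [e1, e1] at h1
    rw [Finset.sum_sub_distrib, Finset.sum_add_distrib, Finset.sum_add_distrib,
      hcardsum, hcardsum]
    linarith
  have hz0 := (Finset.sum_eq_zero_iff_of_nonneg hterm).1 hsum0 kl hkl
  linarith
end

section
/- Lower bound recovery: if I is a set of pairwise incompatible indices containing at least one index of some optimal integral solution, and u* is an optimizer of the merged-objective dual (D_I), then z* = w(u*) + min_{kl ∈ I} r_{kl}(u*). -/
open Matrix

open Finset

/-- Conic Carathéodory: any nonnegative combination can be rewritten with
linearly independent support. -/
private lemma cara_aux {H : Type*} [AddCommGroup H] [Module ℝ H] {p : ℕ} (v : Fin p → H) :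
    ∀ (k : ℕ) (x : Fin p → ℝ), (univ.filter (fun i => x i ≠ 0)).card ≤ k → 0 ≤ x →
    ∃ x' : Fin p → ℝ, 0 ≤ x' ∧ (∑ i, x' i • v i = ∑ i, x i • v i) ∧
      LinearIndependent ℝ (fun i : {i // x' i ≠ 0} => v i.1) := by
  classical
  intro k
  induction k with
  | zero =>
    intro x hcard hx
    refine ⟨x, hx, rfl, ?_⟩
    have hempty : ∀ i, ¬ x i ≠ 0 := by
      intro i hi
      have : i ∈ univ.filter (fun i => x i ≠ 0) := by simp [hi]
      have := card_pos.mpr ⟨i, this⟩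
      omega
    haveI : IsEmpty {i // x i ≠ 0} := ⟨fun i => hempty i.1 i.2⟩
    exact linearIndependent_empty_type
  | succ k ih =>
    intro x hcard hx
    by_cases hli : LinearIndependent ℝ (fun i : {i // x i ≠ 0} => v i.1)
    · exact ⟨x, hx, rfl, hli⟩
    · obtain ⟨g, hgsum, i₁, hgi₁⟩ := Fintype.not_linearIndependent_iff.mp hli
      set μ : Fin p → ℝ := fun i => if h : x i ≠ 0 then g ⟨i, h⟩ else 0 with hμ
      have hμsupp : ∀ i, x i = 0 → μ i = 0 := by
        intro i hi; simp [hμ, hi]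
      have hμsum : ∑ i, μ i • v i = 0 := by
        have hstep : ∑ i ∈ univ.filter (fun i => x i ≠ 0), μ i • v i = ∑ i, μ i • v i := by
          apply Finset.sum_filter_of_ne
          intro i _ hne
          by_contra h
          exact hne (by rw [hμsupp i (by simpa using h), zero_smul])
        rw [← hstep,
          Finset.sum_subtype (p := fun i => x i ≠ 0) _ (by simp) (fun i => μ i • v i),
          ← hgsum]
        refine Finset.sum_congr rfl fun i _ => ?_
        simp [hμ, i.2]
      have hμne : μ (i₁ : Fin p) ≠ 0 := by simpa [hμ, i₁.2] using hgi₁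
      -- choose a version of μ with a positive entry
      obtain ⟨ν, hνsupp, hνsum, iν, hiν⟩ :
          ∃ ν : Fin p → ℝ, (∀ i, x i = 0 → ν i = 0) ∧ (∑ i, ν i • v i = 0) ∧
            ∃ i, 0 < ν i := by
        rcases lt_or_gt_of_ne hμne with hneg | hpos
        · exact ⟨-μ, fun i hi => by simp [hμsupp i hi], by
            simpa [neg_smul, Finset.sum_neg_distrib] using congrArg Neg.neg hμsum,
            ⟨i₁, by simpa using hneg⟩⟩
        · exact ⟨μ, hμsupp, hμsum, ⟨i₁, hpos⟩⟩
      set T : Finset (Fin p) := univ.filter (fun i => 0 < ν i) with hT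
      have hTne : T.Nonempty := ⟨iν, by simp [hT, hiν]⟩
      obtain ⟨i₀, hi₀T, hi₀min⟩ := Finset.exists_min_image T (fun i => x i / ν i) hTne
      have hνi₀ : 0 < ν i₀ := by simpa [hT] using hi₀T
      set t : ℝ := x i₀ / ν i₀ with htdef
      have ht0 : 0 ≤ t := div_nonneg (hx i₀) hνi₀.le
      set x'' : Fin p → ℝ := fun i => x i - t * ν i with hx''
      have hx''nonneg : 0 ≤ x'' := by
        intro i
        rcases le_or_gt (ν i) 0 with hν | hν
        · have : t * ν i ≤ 0 := mul_nonpos_of_nonneg_of_nonpos ht0 hν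
          have hxi : (0:ℝ) ≤ x i := hx i
          simp only [hx'', Pi.zero_apply]; linarith
        · have hiT : i ∈ T := by simp [hT, hν]
          have := hi₀min i hiT
          have : t * ν i ≤ x i := by
            rw [htdef]
            calc x i₀ / ν i₀ * ν i ≤ x i / ν i * ν i := by
                  apply mul_le_mul_of_nonneg_right this hν.le
              _ = x i := div_mul_cancel₀ _ hν.ne'
          have hxi : (0:ℝ) ≤ x i := hx i
          simp only [hx'', Pi.zero_apply]; linarith
      have hx''i₀ : x'' i₀ = 0 := by
        simp only [hx'', htdef]
        field_simp
        ring
      have hx''supp : univ.filter (fun i => x'' i ≠ 0) ⊆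
          (univ.filter (fun i => x i ≠ 0)).erase i₀ := by
        intro i hi
        simp only [mem_filter, mem_univ, true_and] at hi
        rw [Finset.mem_erase]
        constructor
        · rintro rfl; exact hi hx''i₀
        · simp only [mem_filter, mem_univ, true_and]
          intro hxi
          exact hi (by simp [hx'', hxi, hνsupp i hxi])
      have hi₀mem : i₀ ∈ univ.filter (fun i => x i ≠ 0) := by
        simp only [mem_filter, mem_univ, true_and]
        intro h0
        rw [hνsupp i₀ h0] at hνi₀
        exact lt_irrefl 0 hνi₀
      have hcard'' : (univ.filter (fun i => x'' i ≠ 0)).card ≤ k := by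
        have h1 := Finset.card_le_card hx''supp
        have h2 := Finset.card_erase_of_mem hi₀mem
        omega
      obtain ⟨x', h1, h2, h3⟩ := ih x'' hcard'' hx''nonneg
      refine ⟨x', h1, ?_, h3⟩
      rw [h2]
      have : ∑ i, x'' i • v i = ∑ i, x i • v i - t • ∑ i, ν i • v i := by
        rw [Finset.smul_sum, ← Finset.sum_sub_distrib]
        refine Finset.sum_congr rfl fun i _ => ?_
        simp [hx'', sub_smul, smul_smul]
      rw [this, hνsum, smul_zero, sub_zero]

/-- The linear map sending coefficients to the combination. -/
private def combMap {H : Type*} [AddCommGroup H] [Module ℝ H] {p : ℕ} (v : Fin p → H)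
    (t : Finset (Fin p)) : ({i // i ∈ t} → ℝ) →ₗ[ℝ] H where
  toFun x := ∑ i : {i // i ∈ t}, x i • v i.1
  map_add' x y := by simp [add_smul, Finset.sum_add_distrib]
  map_smul' r x := by simp [Finset.smul_sum, smul_smul]

private lemma cone_closed {H : Type*} [NormedAddCommGroup H] [NormedSpace ℝ H] {p : ℕ}
    (v : Fin p → H) :
    IsClosed {z : H | ∃ x : Fin p → ℝ, 0 ≤ x ∧ ∑ i, x i • v i = z} := by
  classical
  have key : {z : H | ∃ x : Fin p → ℝ, 0 ≤ x ∧ ∑ i, x i • v i = z} =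
      ⋃ (t : Finset (Fin p)),
        (if LinearIndependent ℝ (fun i : {i // i ∈ t} => v i.1) then
          combMap v t '' {x | 0 ≤ x} else ∅) := by
    ext z
    simp only [Set.mem_setOf_eq, Set.mem_iUnion]
    constructor
    · rintro ⟨x, hx, rfl⟩
      obtain ⟨x', hx', hsum, hli⟩ := cara_aux v _ x le_rfl hx
      refine ⟨univ.filter (fun i => x' i ≠ 0), ?_⟩
      have hli2 : LinearIndependent ℝ
          (fun i : {i // i ∈ univ.filter (fun i => x' i ≠ 0)} => v i.1) := by
        have φinj : Function.Injective
            (fun i : {i // i ∈ univ.filter (fun i => x' i ≠ 0)} =>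
              (⟨i.1, (mem_filter.mp i.2).2⟩ : {i // x' i ≠ 0})) := by
          intro a b hab
          have : (⟨a.1, (mem_filter.mp a.2).2⟩ : {i // x' i ≠ 0}).val
              = (⟨b.1, (mem_filter.mp b.2).2⟩ : {i // x' i ≠ 0}).val := congrArg Subtype.val hab
          exact Subtype.ext this
        exact hli.comp _ φinj
      rw [if_pos hli2]
      refine ⟨fun i => x' i.1, fun i => hx' i.1, ?_⟩
      show ∑ i : {i // i ∈ univ.filter (fun i => x' i ≠ 0)}, x' i.1 • v i.1 = _
      rw [← Finset.sum_subtype (p := fun i => i ∈ univ.filter (fun i => x' i ≠ 0)) _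
        (fun i => Iff.rfl) (fun i => x' i • v i)]
      rw [← hsum]
      apply Finset.sum_filter_of_ne
      intro i _ hne
      by_contra h
      exact hne (by rw [(by simpa using h : x' i = 0), zero_smul])
    · rintro ⟨t, hz⟩
      by_cases hli : LinearIndependent ℝ (fun i : {i // i ∈ t} => v i.1)
      · rw [if_pos hli] at hz
        obtain ⟨x, hx, rfl⟩ := hz
        refine ⟨fun i => if h : i ∈ t then x ⟨i, h⟩ else 0, ?_, ?_⟩
        · intro i
          by_cases h : i ∈ t <;> simp [h]
          · exact hx ⟨i, h⟩
        · show _ = combMap v t x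
          rw [show combMap v t x = ∑ i : {i // i ∈ t}, x i • v i.1 from rfl]
          have h1 : ∑ i : Fin p, (if h : i ∈ t then x ⟨i, h⟩ else 0) • v i
              = ∑ i ∈ t, (if h : i ∈ t then x ⟨i, h⟩ else 0) • v i :=
            (Finset.sum_subset (Finset.subset_univ t)
              (fun i _ hit => by rw [dif_neg hit, zero_smul])).symm
          show ∑ i : Fin p, (if h : i ∈ t then x ⟨i, h⟩ else 0) • v i = _
          rw [h1, Finset.sum_subtype (p := fun i => i ∈ t) t (fun i => Iff.rfl)
            (fun i => (if h : i ∈ t then x ⟨i, h⟩ else 0) • v i)]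
          refine Finset.sum_congr rfl fun i _ => ?_
          rcases i with ⟨i, hi⟩
          simp [hi]
      · rw [if_neg hli] at hz
        exact absurd hz (Set.notMem_empty z)
  rw [key]
  apply isClosed_iUnion_of_finite
  intro t
  by_cases hli : LinearIndependent ℝ (fun i : {i // i ∈ t} => v i.1)
  · rw [if_pos hli]
    have hker : LinearMap.ker (combMap v t) = ⊥ := by
      rw [LinearMap.ker_eq_bot']
      intro x hx0
      have := Fintype.linearIndependent_iff.mp hli x hx0
      funext i
      exact this i
    have hemb := LinearMap.isClosedEmbedding_of_injective (f := combMap v t) hker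
    apply hemb.isClosedMap
    have : {x : {i // i ∈ t} → ℝ | 0 ≤ x} = ⋂ i, {x | 0 ≤ x i} := by
      ext x; simp [Pi.le_def]
    rw [this]
    exact isClosed_iInter fun i => isClosed_le continuous_const (continuous_apply i)
  · rw [if_neg hli]
    exact isClosed_empty

open scoped InnerProductSpace in
private theorem farkas {H : Type*} [NormedAddCommGroup H] [InnerProductSpace ℝ H]
    [FiniteDimensional ℝ H] {p : ℕ} (v : Fin p → H) (b : H)
    (h : ∀ y : H, (∀ i, 0 ≤ ⟪v i, y⟫_ℝ) → 0 ≤ ⟪b, y⟫_ℝ) :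
    ∃ x : Fin p → ℝ, 0 ≤ x ∧ ∑ i, x i • v i = b := by
  classical
  haveI : CompleteSpace H := FiniteDimensional.complete ℝ H
  by_contra hb
  push_neg at hb
  let K : ConvexCone ℝ H :=
    { carrier := {z : H | ∃ x : Fin p → ℝ, 0 ≤ x ∧ ∑ i, x i • v i = z}
      smul_mem' := by
        rintro r hr z ⟨x, hx, rfl⟩
        refine ⟨fun i => r * x i, fun i => mul_nonneg hr.le (hx i), ?_⟩
        simp only [Finset.smul_sum, smul_smul, smul_eq_mul]
      add_mem' := by
        rintro z ⟨x, hx, rfl⟩ z' ⟨x', hx', rfl⟩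
        refine ⟨fun i => x i + x' i, fun i => add_nonneg (hx i) (hx' i), ?_⟩
        simp only [← Finset.sum_add_distrib, add_smul] }
  have hKne : (K : Set H).Nonempty := ⟨0, ⟨0, le_refl 0, by simp⟩⟩
  have hKcl : IsClosed (K : Set H) := cone_closed v
  have hbK : b ∉ K := by
    intro hmem
    obtain ⟨x, hx, hsum⟩ := hmem
    exact (hb x hx) hsum
  obtain ⟨y, hy1, hy2⟩ :=
    ProperCone.hyperplane_separation' (E := H) (x₀ := b)
      ({ carrier := (K : Set H)
         add_mem' := fun ha hb' => K.add_mem ha hb'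
         zero_mem' := ⟨0, le_refl 0, by simp⟩
         smul_mem' := by
           rintro c z ⟨x, hx, rfl⟩
           refine ⟨fun i => (c:ℝ) * x i, fun i => mul_nonneg c.2 (hx i), ?_⟩
           simp only [NNReal.smul_def, Finset.smul_sum, smul_smul, smul_eq_mul]
           refine Finset.sum_congr rfl fun i _ => ?_
           rw [← smul_assoc]
           rfl
         isClosed' := hKcl } : ProperCone ℝ H) hbK
  have hvK : ∀ i, (v i) ∈ K := by
    intro i
    refine ⟨fun i' => if i' = i then 1 else 0, fun i' => by positivity, ?_⟩
    simp [ite_smul]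
  have := h y (fun i => hy1 (v i) (hvK i))
  linarith

open scoped InnerProductSpace in
private theorem farkas' {ι : Type*} [Fintype ι] {p : ℕ}
    (v : Fin p → ι → ℝ) (b : ι → ℝ)
    (h : ∀ y : ι → ℝ, (∀ i, 0 ≤ ∑ t, v i t * y t) → 0 ≤ ∑ t, b t * y t) :
    ∃ x : Fin p → ℝ, 0 ≤ x ∧ ∀ t, (∑ i, x i * v i t) = b t := by
  classical
  let L := WithLp.linearEquiv 2 ℝ (ι → ℝ)
  have hinner : ∀ (a : ι → ℝ) (y : EuclideanSpace ℝ ι),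
      ⟪L.symm a, y⟫_ℝ = ∑ t, a t * (L y) t := by
    intro a y
    rw [PiLp.inner_apply]
    refine Finset.sum_congr rfl fun t _ => ?_
    simp [RCLike.inner_apply, L]
    ring
  have hyp : ∀ y : EuclideanSpace ℝ ι,
      (∀ i, 0 ≤ ⟪(fun i => L.symm (v i)) i, y⟫_ℝ) → 0 ≤ ⟪L.symm b, y⟫_ℝ := by
    intro y hy
    have hb := h (L y) (fun i => by rw [← hinner (v i) y]; exact hy i)
    rw [hinner b y]
    exact hb
  obtain ⟨x, hx, hsum⟩ := farkas (H := EuclideanSpace ℝ ι)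
    (fun i => L.symm (v i)) (L.symm b) hyp
  refine ⟨x, hx, fun t => ?_⟩
  have h1 : L (∑ i, x i • L.symm (v i)) = L (L.symm b) := congrArg L hsum
  rw [map_sum, L.apply_symm_apply] at h1
  have h2 := congrFun h1 t
  simp only [_root_.map_smul] at h2
  rw [← h2]
  rw [Finset.sum_apply]
  refine Finset.sum_congr rfl fun i _ => ?_
  simp [L]

open Finset

private theorem farkas'' {σ ι : Type*} [Fintype σ] [Fintype ι]
    (v : σ → ι → ℝ) (b : ι → ℝ)
    (h : ∀ y : ι → ℝ, (∀ i, 0 ≤ ∑ t, v i t * y t) → 0 ≤ ∑ t, b t * y t) :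
    ∃ x : σ → ℝ, 0 ≤ x ∧ ∀ t, (∑ i, x i * v i t) = b t := by
  classical
  let e := Fintype.equivFin σ
  obtain ⟨x, hx, hsum⟩ := farkas' (fun k => v (e.symm k)) b
    (fun y hy => h y (fun i => by simpa using hy (e i)))
  refine ⟨fun i => x (e i), fun i => hx (e i), fun t => ?_⟩
  rw [← hsum t]
  exact Fintype.sum_equiv e _ _ (fun i => by rw [e.symm_apply_apply])
open Matrix Finset

/-- KKT / strong duality step: if `u = (uq, uv)` is dual feasible and maximizes the linear
objective `bp ⬝ᵥ uq' + s ⬝ᵥ uv'` over the dual feasible region, then there is a primal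
solution for the right-hand sides `(bp, s)` whose cost equals the optimal dual objective. -/
private theorem dual_opt_primal {m n E : ℕ} (A : Matrix (Fin m) (Fin E) ℝ) (b : Fin m → ℝ)
    (c : Fin E → ℝ) (grp : Fin E → Fin n) (bp : Fin m → ℝ) (s : Fin n → ℝ)
    (uq : Fin m → ℝ) (uv : Fin n → ℝ) (hu : DualFeas A c grp uq uv)
    (hmax : ∀ (uq' : Fin m → ℝ) (uv' : Fin n → ℝ), DualFeas A c grp uq' uv' →
      bp ⬝ᵥ uq' + s ⬝ᵥ uv' ≤ bp ⬝ᵥ uq + s ⬝ᵥ uv) :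
    ∃ x : Fin E → ℝ, 0 ≤ x ∧ bp ≤ A.mulVec x ∧
      (∀ i : Fin n, (∑ j : Fin E, if grp j = i then x j else 0) = s i) ∧
      c ⬝ᵥ x = bp ⬝ᵥ uq + s ⬝ᵥ uv := by
  classical
  set base : Fin E → ℝ := fun j => uv (grp j) + (∑ q, A q j * uq q) with hbase
  let aj : Fin E → (Fin m ⊕ Fin n) → ℝ :=
    fun j => Sum.elim (fun q => A q j) (fun i => if grp j = i then 1 else 0)
  let em : Fin m → (Fin m ⊕ Fin n) → ℝ :=
    fun q => Sum.elim (fun q' => if q' = q then (-1 : ℝ) else 0) (fun _ => 0)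
  let v : (Fin E ⊕ Fin m) → (Fin m ⊕ Fin n) → ℝ :=
    Sum.elim (fun j => if base j = c j then aj j else 0)
      (fun q => if uq q = 0 then em q else 0)
  let g : (Fin m ⊕ Fin n) → ℝ := Sum.elim bp s
  -- the Farkas hypothesis: no feasible ascent direction
  have hyp : ∀ y : (Fin m ⊕ Fin n) → ℝ,
      (∀ e : Fin E ⊕ Fin m, 0 ≤ ∑ t, v e t * y t) → 0 ≤ ∑ t, g t * y t := by
    intro y hy
    by_contra hneg
    push_neg at hneg
    set dq : Fin m → ℝ := fun q => -(y (Sum.inl q)) with hdq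
    set dv : Fin n → ℝ := fun i => -(y (Sum.inr i)) with hdv
    set D : Fin E → ℝ := fun j => (∑ q, A q j * dq q) + dv (grp j) with hD
    have hgy : ∑ t, g t * y t = -(bp ⬝ᵥ dq + s ⬝ᵥ dv) := by
      rw [Fintype.sum_sum_type]
      simp only [dotProduct, hdq, hdv, g, Sum.elim_inl, Sum.elim_inr, mul_neg,
        Finset.sum_neg_distrib, neg_add, neg_neg]
    have hobj : 0 < bp ⬝ᵥ dq + s ⬝ᵥ dv := by rw [hgy] at hneg; linarith
    have hajy : ∀ j, ∑ t, aj j t * y t = -(D j) := by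
      intro j
      rw [Fintype.sum_sum_type]
      simp only [aj, Sum.elim_inl, Sum.elim_inr, hD, hdq, hdv, ite_mul, one_mul, zero_mul,
        mul_neg, Finset.sum_neg_distrib, Finset.sum_ite_eq, mem_univ, if_true, neg_add, neg_neg]
    have htight : ∀ j, base j = c j → D j ≤ 0 := by
      intro j hj
      have h1 := hy (Sum.inl j)
      simp only [v, Sum.elim_inl, if_pos hj] at h1
      rw [hajy j] at h1
      linarith
    have hq0 : ∀ q, uq q = 0 → 0 ≤ dq q := by
      intro q hq
      have h1 := hy (Sum.inr q)
      simp only [v, Sum.elim_inr, if_pos hq] at h1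
      rw [Fintype.sum_sum_type] at h1
      simp only [em, Sum.elim_inl, Sum.elim_inr, ite_mul, zero_mul, neg_mul, one_mul,
        Finset.sum_ite_eq', mem_univ, if_true, Finset.sum_const_zero, add_zero, hdq] at h1
      simpa [hdq] using h1
    -- step size
    set cand : (Fin E ⊕ Fin m) → ℝ :=
      Sum.elim (fun j => if 0 < D j then (c j - base j) / D j else 1)
        (fun q => if dq q < 0 then uq q / (-(dq q)) else 1) with hcand
    have hcand_pos : ∀ e, 0 < cand e := by
      rintro (j | q)
      · simp only [hcand, Sum.elim_inl]
        split_ifs with hDj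
        · have hne : base j ≠ c j := fun h => absurd (htight j h) (by linarith)
          have hle : base j ≤ c j := hu.2 j
          exact div_pos (by cases lt_or_eq_of_le hle with
            | inl h => linarith
            | inr h => exact absurd h hne) hDj
        · norm_num
      · simp only [hcand, Sum.elim_inr]
        split_ifs with hdqq
        · have huqq : uq q ≠ 0 := fun h => absurd (hq0 q h) (by linarith)
          have : 0 < uq q := lt_of_le_of_ne (hu.1 q) (Ne.symm huqq)
          exact div_pos this (by linarith)
        · norm_num
    set tstep : ℝ :=
      if hne : Nonempty (Fin E ⊕ Fin m) then
        Finset.univ.inf' (@Finset.univ_nonempty _ _ hne) cand else 1 with htstep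
    have htpos : 0 < tstep := by
      rw [htstep]
      split_ifs with hne
      · rw [Finset.lt_inf'_iff]
        exact fun e _ => hcand_pos e
      · norm_num
    have htle : ∀ e, tstep ≤ cand e := by
      intro e
      rw [htstep, dif_pos ⟨e⟩]
      exact Finset.inf'_le _ (mem_univ e)
    -- the improved dual point
    set uq' : Fin m → ℝ := fun q => uq q + tstep * dq q with huq'
    set uv' : Fin n → ℝ := fun i => uv i + tstep * dv i with huv'
    have hfeas' : DualFeas A c grp uq' uv' := by
      constructor
      · intro q
        show (0:ℝ) ≤ uq q + tstep * dq q
        rcases le_or_gt 0 (dq q) with h | h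
        · have h0 : (0:ℝ) ≤ uq q := hu.1 q
          nlinarith
        · have h1 := htle (Sum.inr q)
          simp only [hcand, Sum.elim_inr, if_pos h] at h1
          rw [le_div_iff₀ (by linarith)] at h1
          nlinarith
      · intro j
        have hexp : uv' (grp j) + (∑ q, A q j * uq' q) = base j + tstep * D j := by
          simp only [huq', huv', hbase, hD, mul_add, Finset.sum_add_distrib]
          have hswap : ∑ q, A q j * (tstep * dq q) = tstep * ∑ q, A q j * dq q := by
            rw [Finset.mul_sum]; exact Finset.sum_congr rfl fun q _ => by ring
          rw [hswap]
          ring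
        rw [hexp]
        rcases le_or_gt (D j) 0 with h | h
        · have hle : base j ≤ c j := hu.2 j
          nlinarith
        · have h1 := htle (Sum.inl j)
          simp only [hcand, Sum.elim_inl, if_pos h] at h1
          rw [le_div_iff₀ h] at h1
          linarith
    have hcontr := hmax uq' uv' hfeas'
    have hexp2 : bp ⬝ᵥ uq' + s ⬝ᵥ uv'
        = bp ⬝ᵥ uq + s ⬝ᵥ uv + tstep * (bp ⬝ᵥ dq + s ⬝ᵥ dv) := by
      simp only [dotProduct, huq', huv', mul_add, Finset.sum_add_distrib]
      have h1 : ∑ q, bp q * (tstep * dq q) = tstep * ∑ q, bp q * dq q := by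
        rw [Finset.mul_sum]; exact Finset.sum_congr rfl fun q _ => by ring
      have h2 : ∑ i, s i * (tstep * dv i) = tstep * ∑ i, s i * dv i := by
        rw [Finset.mul_sum]; exact Finset.sum_congr rfl fun i _ => by ring
      rw [h1, h2]
      ring
    rw [hexp2] at hcontr
    nlinarith
  obtain ⟨x, hx, hsum⟩ := farkas'' v g hyp
  set xe : Fin E → ℝ := fun j => if base j = c j then x (Sum.inl j) else 0 with hxe
  set yq : Fin m → ℝ := fun q => if uq q = 0 then x (Sum.inr q) else 0 with hyq
  have hEq : ∀ t, (∑ j, xe j * aj j t) + (∑ q, yq q * em q t) = g t := by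
    intro t
    rw [← hsum t, Fintype.sum_sum_type]
    congr 1
    · refine Finset.sum_congr rfl fun j _ => ?_
      simp only [v, Sum.elim_inl, hxe]
      split_ifs <;> simp
    · refine Finset.sum_congr rfl fun q _ => ?_
      simp only [v, Sum.elim_inr, hyq]
      split_ifs <;> simp
  have heq1 : ∀ q, (∑ j, xe j * A q j) - yq q = bp q := by
    intro q
    have h0 := hEq (Sum.inl q)
    simp only [aj, em, Sum.elim_inl, g, mul_ite, mul_neg_one, mul_zero,
      Finset.sum_ite_eq, Finset.sum_ite_eq', mem_univ, if_true] at h0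
    linarith
  have heq2 : ∀ i, (∑ j, if grp j = i then xe j else 0) = s i := by
    intro i
    have h0 := hEq (Sum.inr i)
    simp only [aj, em, Sum.elim_inr, g, mul_ite, mul_one, mul_zero,
      Finset.sum_const_zero, add_zero] at h0
    rw [← h0]
  have hyq_nonneg : ∀ q, 0 ≤ yq q := by
    intro q
    simp only [hyq]
    split_ifs
    · exact hx _
    · exact le_refl 0
  refine ⟨xe, ?_, ?_, heq2, ?_⟩
  · intro j
    show (0:ℝ) ≤ xe j
    simp only [hxe]
    split_ifs
    · exact hx _
    · exact le_refl 0
  · intro q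
    show bp q ≤ A.mulVec xe q
    rw [Matrix.mulVec, dotProduct, ← heq1 q]
    have : ∑ j, A q j * xe j = ∑ j, xe j * A q j :=
      Finset.sum_congr rfl fun j _ => mul_comm _ _
    rw [this]
    linarith [hyq_nonneg q]
  · -- objective value
    have hcx : c ⬝ᵥ xe = ∑ j, (uv (grp j) + (∑ q, A q j * uq q)) * xe j := by
      rw [dotProduct]
      refine Finset.sum_congr rfl fun j _ => ?_
      by_cases hj : base j = c j
      · rw [show xe j = x (Sum.inl j) by simp only [hxe]; rw [if_pos hj], ← hj, hbase]
      · rw [show xe j = 0 by simp only [hxe]; rw [if_neg hj], mul_zero, mul_zero]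
    rw [hcx]
    have hsplit : ∑ j, (uv (grp j) + (∑ q, A q j * uq q)) * xe j
        = (∑ j, uv (grp j) * xe j) + ∑ j, (∑ q, A q j * uq q) * xe j := by
      rw [← Finset.sum_add_distrib]
      exact Finset.sum_congr rfl fun j _ => by ring
    rw [hsplit]
    have hfirst : ∑ j, uv (grp j) * xe j = s ⬝ᵥ uv := by
      have h1 : ∑ j, uv (grp j) * xe j = ∑ j, ∑ i, if grp j = i then uv i * xe j else 0 :=
        Finset.sum_congr rfl fun j _ => by
          rw [Finset.sum_ite_eq, if_pos (mem_univ _)]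
      rw [h1, Finset.sum_comm, dotProduct]
      refine Finset.sum_congr rfl fun i _ => ?_
      have h2 : ∑ j, (if grp j = i then uv i * xe j else 0)
          = uv i * ∑ j, (if grp j = i then xe j else 0) := by
        rw [Finset.mul_sum]
        refine Finset.sum_congr rfl fun j _ => ?_
        split_ifs <;> simp
      rw [h2, heq2 i, mul_comm]
    have hyquq : ∀ q, uq q * yq q = 0 := by
      intro q
      simp only [hyq]
      by_cases hq : uq q = 0
      · rw [if_pos hq, hq, zero_mul]
      · rw [if_neg hq, mul_zero]
    have hsecond : ∑ j, (∑ q, A q j * uq q) * xe j = bp ⬝ᵥ uq := by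
      have e1 : ∑ j, (∑ q, A q j * uq q) * xe j = ∑ j, ∑ q, A q j * uq q * xe j :=
        Finset.sum_congr rfl fun j _ => Finset.sum_mul ..
      have h1 : ∑ j, (∑ q, A q j * uq q) * xe j = ∑ q, uq q * ∑ j, xe j * A q j := by
        rw [e1, Finset.sum_comm]
        refine Finset.sum_congr rfl fun q _ => ?_
        rw [Finset.mul_sum]
        exact Finset.sum_congr rfl fun j _ => by ring
      have h2 : ∀ q, ∑ j, xe j * A q j = bp q + yq q := by
        intro q
        have := heq1 q
        linarith
      have e2 : ∑ q, uq q * ∑ j, xe j * A q j = ∑ q, uq q * (bp q + yq q) :=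
        Finset.sum_congr rfl fun q _ => by rw [h2 q]
      have h3 : ∑ q, uq q * (bp q + yq q) = ∑ q, uq q * bp q + ∑ q, uq q * yq q := by
        rw [← Finset.sum_add_distrib]
        exact Finset.sum_congr rfl fun q _ => by ring
      have e3 : ∑ q, uq q * yq q = 0 :=
        Finset.sum_eq_zero fun q _ => hyquq q
      rw [h1, e2, h3, e3, add_zero, dotProduct]
      exact Finset.sum_congr rfl fun q _ => mul_comm _ _
    rw [hfirst, hsecond]
    ring

/-- Lower bound recovery: if I is a nonempty set of pairwise incompatible indices
containing at least one index of some optimal integral solution, and u* optimizes the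
merged-objective dual (D_I), then z* = w(u*) + min_{kl ∈ I} r_{kl}(u*). -/
theorem stmt17 {m n E : ℕ} (A : Matrix (Fin m) (Fin E) ℝ) (b : Fin m → ℝ)
    (c : Fin E → ℝ) (grp : Fin E → Fin n) (zstar : ℝ)
    (hz : IsLeast {z | ∃ x : Fin E → ℝ, Feas A b grp x ∧ c ⬝ᵥ x = z} zstar)
    (hideal : ∀ c' : Fin E → ℝ, (∃ x0 : Fin E → ℝ, Feas A b grp x0) →
      ∃ xt : Fin E → ℝ, Feas A b grp xt ∧ Integral xt ∧
        ∀ y : Fin E → ℝ, Feas A b grp y → c' ⬝ᵥ xt ≤ c' ⬝ᵥ y)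
    (I : Finset (Fin E)) (hI : I.Nonempty)
    (hinc : ∀ x : Fin E → ℝ, Feas A b grp x → Integral x →
      ∀ j ∈ I, ∀ j' ∈ I, x j = 1 → x j' = 1 → j = j')
    (hmem : ∀ j ∈ I, ∃ x : Fin E → ℝ, Feas A b grp x ∧ Integral x ∧ x j = 1)
    (R : Fin E → ℝ)
    (hR : ∀ j ∈ I,
      IsLeast {z | ∃ x : Fin E → ℝ, Feas A b grp x ∧ x j = 1 ∧ c ⬝ᵥ x = z}
        (zstar + R j))
    (hopt0 : ∃ kl ∈ I, ∃ x : Fin E → ℝ, Feas A b grp x ∧ Integral x ∧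
      c ⬝ᵥ x = zstar ∧ x kl = 1)
    (uq : Fin m → ℝ) (uv : Fin n → ℝ) (hu : DualFeas A c grp uq uv)
    (hmaxu : ∀ (uq' : Fin m → ℝ) (uv' : Fin n → ℝ), DualFeas A c grp uq' uv' →
      dualObj b uq' uv' + (1 / (I.card : ℝ)) * ∑ kl ∈ I, rc A c grp uq' uv' kl ≤
      dualObj b uq uv + (1 / (I.card : ℝ)) * ∑ kl ∈ I, rc A c grp uq uv kl) :
    zstar = dualObj b uq uv + I.inf' hI (fun kl => rc A c grp uq uv kl) := by
  classical
  open Finset in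
  -- Step A : R is nonnegative on I and vanishes at some kl₀ ∈ I
  have hR0 : ∀ j ∈ I, 0 ≤ R j := by
    intro j hj
    obtain ⟨x, hxF, hxj, hxc⟩ := (hR j hj).1
    have := hz.2 ⟨x, hxF, hxc⟩
    linarith
  obtain ⟨kl₀, hkl₀I, x₀, hx₀F, hx₀int, hx₀c, hx₀kl⟩ := hopt0
  have hRkl₀ : R kl₀ = 0 := by
    have h1 := (hR kl₀ hkl₀I).2 ⟨x₀, hx₀F, hx₀kl, hx₀c⟩
    have h2 := hR0 kl₀ hkl₀I
    linarith
  -- Step B : the valid inequality c·x ≥ z* + Σ_{kl ∈ I} R kl x kl on the whole polytope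
  have hvalid : ∀ x : Fin E → ℝ, Feas A b grp x →
      zstar + ∑ kl ∈ I, R kl * x kl ≤ c ⬝ᵥ x := by
    set c' : Fin E → ℝ := fun j => c j - (if j ∈ I then R j else 0) with hc'
    have hc'dot : ∀ y : Fin E → ℝ, c' ⬝ᵥ y = c ⬝ᵥ y - ∑ kl ∈ I, R kl * y kl := by
      intro y
      rw [dotProduct, dotProduct]
      have h1 : ∀ j, c' j * y j = c j * y j - (if j ∈ I then R j * y j else 0) := by
        intro j; simp only [hc']; split_ifs <;> ring
      have h2 : ∑ j, c' j * y j = ∑ j, (c j * y j - (if j ∈ I then R j * y j else 0)) :=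
        Finset.sum_congr rfl fun j _ => h1 j
      rw [h2, Finset.sum_sub_distrib]
      congr 1
      rw [Finset.sum_ite_mem, Finset.univ_inter]
    obtain ⟨x0, hx0F, _⟩ := hz.1
    obtain ⟨xt, hxtF, hxtInt, hxtOpt⟩ := hideal c' ⟨x0, hx0F⟩
    have hzt : zstar ≤ c' ⬝ᵥ xt := by
      rw [hc'dot xt]
      by_cases hcase : ∃ j₀ ∈ I, xt j₀ = 1
      · obtain ⟨j₀, hj₀I, hj₀⟩ := hcase
        have hsum : ∑ kl ∈ I, R kl * xt kl = R j₀ := by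
          rw [Finset.sum_eq_single j₀]
          · rw [hj₀, mul_one]
          · intro j hj hne
            have : xt j = 0 := by
              rcases hxtInt j with h | h
              · exact h
              · exact absurd (hinc xt hxtF hxtInt j hj j₀ hj₀I h hj₀) hne
            rw [this, mul_zero]
          · intro h; exact absurd hj₀I h
        rw [hsum]
        have := (hR j₀ hj₀I).2 ⟨xt, hxtF, hj₀, rfl⟩
        linarith
      · push_neg at hcase
        have hsum : ∑ kl ∈ I, R kl * xt kl = 0 := by
          refine Finset.sum_eq_zero fun kl hkl => ?_
          rcases hxtInt kl with h | h
          · rw [h, mul_zero]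
          · exact absurd h (hcase kl hkl)
        rw [hsum]
        have := hz.2 ⟨xt, hxtF, rfl⟩
        linarith
    intro x hxF
    have := hxtOpt x hxF
    rw [hc'dot x] at this
    linarith
  -- Step C : per-index weak duality  w(u) + r_j(u) ≤ z* + R j
  have hrc_nonneg : ∀ j', 0 ≤ rc A c grp uq uv j' := by
    intro j'
    have := hu.2 j'
    simp only [rc]
    linarith
  have hweak : ∀ j ∈ I, dualObj b uq uv + rc A c grp uq uv j ≤ zstar + R j := by
    intro j hj
    obtain ⟨x, hxF, hxj, hxc⟩ := (hR j hj).1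
    obtain ⟨hxA, hxgrp, hxpos⟩ := hxF
    have hsplit : c ⬝ᵥ x = (∑ j', uv (grp j') * x j')
        + (∑ j', (∑ q, A q j' * uq q) * x j')
        + ∑ j', rc A c grp uq uv j' * x j' := by
      rw [dotProduct, ← Finset.sum_add_distrib, ← Finset.sum_add_distrib]
      refine Finset.sum_congr rfl fun j' _ => ?_
      simp only [rc]; ring
    have hT1 : ∑ j', uv (grp j') * x j' = ∑ i, uv i := by
      have h1 : ∑ j', uv (grp j') * x j' = ∑ j', ∑ i, if grp j' = i then uv i * x j' else 0 :=
        Finset.sum_congr rfl fun j' _ => by rw [Finset.sum_ite_eq, if_pos (Finset.mem_univ _)]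
      rw [h1, Finset.sum_comm]
      refine Finset.sum_congr rfl fun i _ => ?_
      have h2 : ∑ j', (if grp j' = i then uv i * x j' else 0)
          = uv i * ∑ j', (if grp j' = i then x j' else 0) := by
        rw [Finset.mul_sum]
        exact Finset.sum_congr rfl fun j' _ => by split_ifs <;> simp
      rw [h2, hxgrp i, mul_one]
    have hT2 : b ⬝ᵥ uq ≤ ∑ j', (∑ q, A q j' * uq q) * x j' := by
      have h1 : ∑ j', (∑ q, A q j' * uq q) * x j' = ∑ q, uq q * (A.mulVec x q) := by
        have e1 : ∑ j', (∑ q, A q j' * uq q) * x j' = ∑ j', ∑ q, A q j' * uq q * x j' :=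
          Finset.sum_congr rfl fun j' _ => Finset.sum_mul ..
        rw [e1, Finset.sum_comm]
        refine Finset.sum_congr rfl fun q _ => ?_
        rw [Matrix.mulVec, dotProduct, Finset.mul_sum]
        exact Finset.sum_congr rfl fun j' _ => by ring
      rw [h1, dotProduct]
      refine Finset.sum_le_sum fun q _ => ?_
      have h2 : b q ≤ A.mulVec x q := hxA q
      have h3 : (0:ℝ) ≤ uq q := hu.1 q
      calc b q * uq q = uq q * b q := mul_comm _ _
        _ ≤ uq q * A.mulVec x q := mul_le_mul_of_nonneg_left h2 h3
    have hT3 : rc A c grp uq uv j ≤ ∑ j', rc A c grp uq uv j' * x j' := by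
      have h4 := Finset.single_le_sum (f := fun j' => rc A c grp uq uv j' * x j')
        (fun j' _ => mul_nonneg (hrc_nonneg j') (hxpos j')) (Finset.mem_univ j)
      simp only [hxj, mul_one] at h4
      exact h4
    rw [← hxc, hsplit, dualObj]
    linarith
  -- Step D : strong duality through the merged objective
  set N : ℝ := (I.card : ℝ) with hNdef
  have hN : 0 < N := by
    rw [hNdef]
    exact_mod_cast Finset.card_pos.mpr hI
  set bp : Fin m → ℝ := fun q => b q - (1/N) * ∑ kl ∈ I, A q kl with hbp
  set s : Fin n → ℝ :=
    fun i => 1 - ((I.filter (fun kl => grp kl = i)).card : ℝ) / N with hs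
  have hmerged : ∀ (uq' : Fin m → ℝ) (uv' : Fin n → ℝ),
      dualObj b uq' uv' + (1/N) * ∑ kl ∈ I, rc A c grp uq' uv' kl
        = (1/N) * (∑ kl ∈ I, c kl) + (bp ⬝ᵥ uq' + s ⬝ᵥ uv') := by
    intro uq' uv'
    have f1 : ∑ kl ∈ I, uv' (grp kl)
        = ∑ i, ((I.filter (fun kl => grp kl = i)).card : ℝ) * uv' i := by
      have h1 : ∑ kl ∈ I, uv' (grp kl) = ∑ kl ∈ I, ∑ i, if grp kl = i then uv' i else 0 :=
        Finset.sum_congr rfl fun kl _ => by rw [Finset.sum_ite_eq, if_pos (Finset.mem_univ _)]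
      rw [h1, Finset.sum_comm]
      refine Finset.sum_congr rfl fun i _ => ?_
      rw [← Finset.sum_filter, Finset.sum_const, nsmul_eq_mul]
    have f2 : ∑ kl ∈ I, ∑ q, A q kl * uq' q = ∑ q, (∑ kl ∈ I, A q kl) * uq' q := by
      rw [Finset.sum_comm]
      exact Finset.sum_congr rfl fun q _ => (Finset.sum_mul ..).symm
    have hrcsum : ∑ kl ∈ I, rc A c grp uq' uv' kl
        = ∑ kl ∈ I, c kl - ∑ kl ∈ I, uv' (grp kl) - ∑ kl ∈ I, ∑ q, A q kl * uq' q := by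
      simp only [rc, Finset.sum_sub_distrib]
    have hbpdot : bp ⬝ᵥ uq' = b ⬝ᵥ uq' - (1/N) * ∑ q, (∑ kl ∈ I, A q kl) * uq' q := by
      rw [dotProduct, dotProduct, Finset.mul_sum, ← Finset.sum_sub_distrib]
      refine Finset.sum_congr rfl fun q _ => ?_
      simp only [hbp]
      ring
    have hsdot : s ⬝ᵥ uv' = (∑ i, uv' i)
        - (1/N) * ∑ i, ((I.filter (fun kl => grp kl = i)).card : ℝ) * uv' i := by
      rw [dotProduct, Finset.mul_sum, ← Finset.sum_sub_distrib]
      refine Finset.sum_congr rfl fun i _ => ?_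
      simp only [hs]
      ring
    rw [hrcsum, f1, f2, hbpdot, hsdot, dualObj]
    ring
  have hmaxu' : ∀ (uq' : Fin m → ℝ) (uv' : Fin n → ℝ), DualFeas A c grp uq' uv' →
      bp ⬝ᵥ uq' + s ⬝ᵥ uv' ≤ bp ⬝ᵥ uq + s ⬝ᵥ uv := by
    intro uq' uv' hf
    have h1 := hmaxu uq' uv' hf
    rw [hmerged uq' uv', hmerged uq uv] at h1
    linarith
  obtain ⟨x', hx'0, hx'A, hx'grp, hx'c⟩ := dual_opt_primal A b c grp bp s uq uv hu hmaxu'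
  set x : Fin E → ℝ := fun j => x' j + if j ∈ I then 1/N else 0 with hxdef
  have hind : ∀ q, ∑ j, A q j * (if j ∈ I then 1/N else 0) = (1/N) * ∑ kl ∈ I, A q kl := by
    intro q
    have h1 : ∀ j, A q j * (if j ∈ I then 1/N else 0)
        = if j ∈ I then A q j * (1/N) else 0 := by
      intro j; split_ifs <;> simp
    rw [Finset.sum_congr rfl fun j _ => h1 j, Finset.sum_ite_mem, Finset.univ_inter,
      Finset.mul_sum]
    exact Finset.sum_congr rfl fun kl _ => mul_comm _ _
  have hxF : Feas A b grp x := by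
    refine ⟨?_, ?_, ?_⟩
    · intro q
      show b q ≤ A.mulVec x q
      have hmv : A.mulVec x q = A.mulVec x' q + (1/N) * ∑ kl ∈ I, A q kl := by
        rw [Matrix.mulVec, Matrix.mulVec, dotProduct, dotProduct, ← hind q,
          ← Finset.sum_add_distrib]
        refine Finset.sum_congr rfl fun j _ => ?_
        simp only [hxdef]
        ring
      rw [hmv]
      have h2 : bp q ≤ A.mulVec x' q := hx'A q
      simp only [hbp] at h2
      linarith
    · intro i
      have h1 : ∀ j, (if grp j = i then x j else 0)
          = (if grp j = i then x' j else 0)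
            + (if j ∈ I then (if grp j = i then 1/N else 0) else 0) := by
        intro j
        simp only [hxdef]
        by_cases h2 : grp j = i <;> by_cases h3 : j ∈ I <;> simp [h2, h3]
      rw [Finset.sum_congr rfl fun j _ => h1 j, Finset.sum_add_distrib, hx'grp i,
        Finset.sum_ite_mem, Finset.univ_inter, ← Finset.sum_filter, Finset.sum_const,
        nsmul_eq_mul]
      simp only [hs]
      field_simp
      ring
    · intro j
      show 0 ≤ x' j + if j ∈ I then 1/N else 0
      have h0 : (0:ℝ) ≤ x' j := hx'0 j
      have h5 : (0:ℝ) < 1/N := by positivity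
      split_ifs <;> linarith
  have hxc : c ⬝ᵥ x = dualObj b uq uv + (1/N) * ∑ kl ∈ I, rc A c grp uq uv kl := by
    have h1 : c ⬝ᵥ x = c ⬝ᵥ x' + (1/N) * ∑ kl ∈ I, c kl := by
      rw [dotProduct, dotProduct]
      have h2 : ∀ j, c j * x j = c j * x' j + (if j ∈ I then c j * (1/N) else 0) := by
        intro j
        simp only [hxdef]
        split_ifs <;> ring
      rw [Finset.sum_congr rfl fun j _ => h2 j, Finset.sum_add_distrib,
        Finset.sum_ite_mem, Finset.univ_inter, Finset.mul_sum]
      congr 1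
      exact Finset.sum_congr rfl fun kl _ => mul_comm _ _
    rw [h1, hx'c, hmerged uq uv]
    ring
  have hxlow : ∀ kl ∈ I, 1/N ≤ x kl := by
    intro kl hkl
    show 1/N ≤ x' kl + if kl ∈ I then 1/N else 0
    rw [if_pos hkl]
    have h0 : (0:ℝ) ≤ x' kl := hx'0 kl
    linarith
  -- Step E : combine everything
  have hlow : zstar + (1/N) * ∑ kl ∈ I, R kl
      ≤ dualObj b uq uv + (1/N) * ∑ kl ∈ I, rc A c grp uq uv kl := by
    have h1 := hvalid x hxF
    have h2 : (1/N) * ∑ kl ∈ I, R kl ≤ ∑ kl ∈ I, R kl * x kl := by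
      rw [Finset.mul_sum]
      refine Finset.sum_le_sum fun kl hkl => ?_
      have h3 := hxlow kl hkl
      have h4 := hR0 kl hkl
      calc 1/N * R kl = R kl * (1/N) := mul_comm _ _
        _ ≤ R kl * x kl := mul_le_mul_of_nonneg_left h3 h4
    rw [← hxc]
    linarith
  have hNa : N * (1/N) = 1 := by field_simp
  have hsumub : N * zstar + ∑ kl ∈ I, R kl
      ≤ N * dualObj b uq uv + ∑ kl ∈ I, rc A c grp uq uv kl := by
    have h4 := mul_le_mul_of_nonneg_left hlow hN.le
    calc N * zstar + ∑ kl ∈ I, R kl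
        = N * (zstar + (1/N) * ∑ kl ∈ I, R kl) := by
          rw [mul_add, ← mul_assoc, hNa, one_mul]
      _ ≤ N * (dualObj b uq uv + (1/N) * ∑ kl ∈ I, rc A c grp uq uv kl) := h4
      _ = N * dualObj b uq uv + ∑ kl ∈ I, rc A c grp uq uv kl := by
          rw [mul_add, ← mul_assoc, hNa, one_mul]
  have hterm0 : ∀ kl ∈ I,
      zstar + R kl - (dualObj b uq uv + rc A c grp uq uv kl) = 0 := by
    have hsum0 : ∑ kl ∈ I, (zstar + R kl - (dualObj b uq uv + rc A c grp uq uv kl)) = 0 := by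
      have hsplit : ∑ kl ∈ I, (zstar + R kl - (dualObj b uq uv + rc A c grp uq uv kl))
          = (N * zstar + ∑ kl ∈ I, R kl)
            - (N * dualObj b uq uv + ∑ kl ∈ I, rc A c grp uq uv kl) := by
        rw [Finset.sum_sub_distrib, Finset.sum_add_distrib, Finset.sum_add_distrib,
          Finset.sum_const, Finset.sum_const, nsmul_eq_mul, nsmul_eq_mul, ← hNdef]
      have hge := hsumub
      have hle2 : ∀ kl ∈ I, 0 ≤ zstar + R kl - (dualObj b uq uv + rc A c grp uq uv kl) := by
        intro kl hkl
        have := hweak kl hkl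
        linarith
      have h5 : 0 ≤ ∑ kl ∈ I, (zstar + R kl - (dualObj b uq uv + rc A c grp uq uv kl)) :=
        Finset.sum_nonneg hle2
      rw [hsplit]
      linarith
    intro kl hkl
    have hle2 : ∀ kl ∈ I, 0 ≤ zstar + R kl - (dualObj b uq uv + rc A c grp uq uv kl) := by
      intro kl hkl
      have := hweak kl hkl
      linarith
    exact (Finset.sum_eq_zero_iff_of_nonneg hle2).mp hsum0 kl hkl
  have hinf : I.inf' hI (fun kl => rc A c grp uq uv kl) = zstar - dualObj b uq uv := by
    apply le_antisymm
    · have h1 : I.inf' hI (fun kl => rc A c grp uq uv kl) ≤ rc A c grp uq uv kl₀ :=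
        Finset.inf'_le _ hkl₀I
      have h2 := hterm0 kl₀ hkl₀I
      rw [hRkl₀] at h2
      linarith
    · apply Finset.le_inf'
      intro kl hkl
      have h2 := hterm0 kl hkl
      have h3 := hR0 kl hkl
      show zstar - dualObj b uq uv ≤ rc A c grp uq uv kl
      linarith
  rw [hinf]
  ring
end
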